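/- Let f : ℝⁿ → ℝ be convex and differentiable, T > 0, and let X : [0,T) → ℝⁿ solve 0 = Ẍ − (3/(t−T))Ẋ + 2∇f(X). Define Φ(t) = (2/(T−t)²)( f(X(t)) − f(X(T)) ) − (2/(T−t)⁴)‖X(t) − X(T)‖² + (1/(2(T−t)⁴))‖(T−t)Ẋ(t) + 2(X(t) − X(T))‖², where X(T) = lim_{t→T⁻} X(t) exists. Then Φ is nonincreasing on [0,T). -/

import Mathlib

open Filter MeasureTheory
open scoped RealInnerProductSpace Topology

theorem ogmg_ode_lyapunov_nonincreasing
    {E : Type*} [NormedAddCommGroup E] [InnerProductSpace ℝ E] [CompleteSpace E]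
    (f : E → ℝ) (g : E → E)
    (hgrad : ∀ x, HasGradientAt f (g x) x)
    (hconv : ∀ x y, 0 ≤ f x - f y - ⟪g y, x - y⟫)
    (T : ℝ) (hT : 0 < T)
    (X X' X'' : ℝ → E)
    (hX' : ∀ t ∈ Set.Ico (0:ℝ) T, HasDerivAt X (X' t) t)
    (hX'' : ∀ t ∈ Set.Ico (0:ℝ) T, HasDerivAt X' (X'' t) t)
    (hODE : ∀ t ∈ Set.Ico (0:ℝ) T,
      X'' t - (3 / (t - T)) • X' t + (2:ℝ) • g (X t) = 0)
    (XT : E) (hXT : Tendsto X (𝓝[<] T) (𝓝 XT)) :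
    AntitoneOn (fun t =>
        (2 / (T - t) ^ 2) * (f (X t) - f XT)
          - (2 / (T - t) ^ 4) * ‖X t - XT‖ ^ 2
          + (1 / (2 * (T - t) ^ 4)) * ‖(T - t) • X' t + (2:ℝ) • (X t - XT)‖ ^ 2)
      (Set.Ico 0 T) := by
  have key : ∀ t ∈ Set.Ico (0:ℝ) T,
      HasDerivAt (fun t =>
        (2 / (T - t) ^ 2) * (f (X t) - f XT)
          - (2 / (T - t) ^ 4) * ‖X t - XT‖ ^ 2
          + (1 / (2 * (T - t) ^ 4)) * ‖(T - t) • X' t + (2:ℝ) • (X t - XT)‖ ^ 2)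
        ((4 / (T - t) ^ 3) * (f (X t) - f XT - ⟪g (X t), X t - XT⟫)) t := by
    intro t ht
    have htT : t < T := ht.2
    have hτ : T - t ≠ 0 := by linarith
    -- derivative of f ∘ X
    have hfX : HasDerivAt (fun s => f (X s)) ⟪g (X t), X' t⟫ t := by
      have := ((hgrad (X t)).hasFDerivAt).comp_hasDerivAt t (hX' t ht)
      simp [InnerProductSpace.toDual_apply_apply] at this; exact this
    -- derivative of u := X - XT
    have hu : HasDerivAt (fun s => X s - XT) (X' t) t := (hX' t ht).sub_const XT
    -- derivative of ‖u‖²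
    have hm : HasDerivAt (fun s => ‖X s - XT‖ ^ 2)
        (2 * ⟪X t - XT, X' t⟫) t := by
      have h := (hu.inner ℝ hu)
      have : (fun s => ‖X s - XT‖ ^ 2) = fun s => ⟪X s - XT, X s - XT⟫ := by
        funext s; rw [real_inner_self_eq_norm_sq]
      rw [this]
      refine h.congr_deriv ?_
      rw [real_inner_comm]; ring
    -- V := (T - s) • X' s + 2 • (X s - XT)
    have hV : HasDerivAt (fun s => (T - s) • X' s + (2:ℝ) • (X s - XT))
        ((-2 : ℝ) • X' t - (2 * (T - t)) • g (X t)) t := by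
      have hTs : HasDerivAt (fun s : ℝ => T - s) (-1 : ℝ) t := by
        simpa using (hasDerivAt_id t).const_sub T
      have h1 : HasDerivAt (fun s => (T - s) • X' s)
          ((T - t) • X'' t + (-1 : ℝ) • X' t) t := hTs.smul (hX'' t ht)
      have h2 : HasDerivAt (fun s => (2:ℝ) • (X s - XT)) ((2:ℝ) • X' t) t :=
        hu.const_smul (2:ℝ)
      have h := h1.add h2
      refine h.congr_deriv ?_
      have hX''eq : X'' t = (3 / (t - T)) • X' t - (2:ℝ) • g (X t) := by
        have := hODE t ht
        have : X'' t = (3 / (t - T)) • X' t - (2:ℝ) • g (X t) := by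
          rw [eq_sub_iff_add_eq, ← sub_eq_zero]
          linear_combination (norm := module) this
        exact this
      rw [hX''eq]
      have htT' : t - T ≠ 0 := by intro h; apply hτ; linarith
      rw [smul_sub, smul_smul, smul_smul]
      have h3 : (T - t) * (3 / (t - T)) = -3 := by field_simp; ring
      rw [h3]
      module
    -- derivative of ‖V‖²
    have hC : HasDerivAt (fun s => ‖(T - s) • X' s + (2:ℝ) • (X s - XT)‖ ^ 2)
        (2 * ⟪(T - t) • X' t + (2:ℝ) • (X t - XT),
          (-2 : ℝ) • X' t - (2 * (T - t)) • g (X t)⟫) t := by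
      have h := (hV.inner ℝ hV)
      have : (fun s => ‖(T - s) • X' s + (2:ℝ) • (X s - XT)‖ ^ 2)
          = fun s => ⟪(T - s) • X' s + (2:ℝ) • (X s - XT),
              (T - s) • X' s + (2:ℝ) • (X s - XT)⟫ := by
        funext s; rw [real_inner_self_eq_norm_sq]
      rw [this]
      refine h.congr_deriv ?_
      rw [real_inner_comm ((-2 : ℝ) • X' t - (2 * (T - t)) • g (X t))]
      ring
    -- scalar factor derivatives
    have hs1 : HasDerivAt (fun s : ℝ => 2 / (T - s) ^ 2) (4 / (T - t) ^ 3) t := by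
      have hTs : HasDerivAt (fun s : ℝ => (T - s) ^ 2) (2 * (T - t) * (-1)) t := by
        have h0 := (((hasDerivAt_id t).const_sub T).pow 2); simp at h0 ⊢; exact h0
      have := (hasDerivAt_const t (2:ℝ)).div hTs (pow_ne_zero 2 hτ)
      refine this.congr_deriv ?_
      field_simp
      ring
    have hs2 : HasDerivAt (fun s : ℝ => 2 / (T - s) ^ 4) (8 / (T - t) ^ 5) t := by
      have hTs : HasDerivAt (fun s : ℝ => (T - s) ^ 4) (4 * (T - t) ^ 3 * (-1)) t := by
        have h0 := (((hasDerivAt_id t).const_sub T).pow 4); simp at h0 ⊢; exact h0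
      have := (hasDerivAt_const t (2:ℝ)).div hTs (pow_ne_zero 4 hτ)
      refine this.congr_deriv ?_
      field_simp
      ring
    have hs3 : HasDerivAt (fun s : ℝ => 1 / (2 * (T - s) ^ 4)) (2 / (T - t) ^ 5) t := by
      have hTs : HasDerivAt (fun s : ℝ => 2 * (T - s) ^ 4)
          (2 * (4 * (T - t) ^ 3 * (-1))) t := by
        simpa using ((((hasDerivAt_id t).const_sub T).pow 4).const_mul 2)
      have h2τ : 2 * (T - t) ^ 4 ≠ 0 := by positivity
      have := (hasDerivAt_const t (1:ℝ)).div hTs h2τ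
      refine this.congr_deriv ?_
      field_simp
      ring
    -- assemble
    have hA : HasDerivAt (fun s => f (X s) - f XT) ⟪g (X t), X' t⟫ t :=
      hfX.sub_const (f XT)
    have htotal := ((hs1.mul hA).sub (hs2.mul hm)).add (hs3.mul hC)
    refine htotal.congr_deriv ?_
    -- algebra: expand inner products and simplify
    have hq : ⟪(T - t) • X' t + (2:ℝ) • (X t - XT),
        (-2 : ℝ) • X' t - (2 * (T - t)) • g (X t)⟫
        = -2 * (T - t) * ⟪X' t, X' t⟫ - 2 * (T - t) ^ 2 * ⟪X' t, g (X t)⟫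
          - 4 * ⟪X t - XT, X' t⟫ - 4 * (T - t) * ⟪X t - XT, g (X t)⟫ := by
      simp only [inner_add_left, inner_sub_right, real_inner_smul_left,
        real_inner_smul_right]
      ring
    have hn : ‖(T - t) • X' t + (2:ℝ) • (X t - XT)‖ ^ 2
        = (T - t) ^ 2 * ⟪X' t, X' t⟫ + 4 * (T - t) * ⟪X t - XT, X' t⟫
          + 4 * ‖X t - XT‖ ^ 2 := by
      rw [← real_inner_self_eq_norm_sq]
      simp only [inner_add_left, inner_add_right, real_inner_smul_left,
        real_inner_smul_right]
      rw [real_inner_self_eq_norm_sq (X t - XT)]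
      rw [real_inner_comm (X' t) (X t - XT)]
      ring
    rw [hq, hn]
    rw [real_inner_comm (X' t) (g (X t)), real_inner_comm (X t - XT) (g (X t))]
    have hgc : ⟪g (X t), X t - XT⟫ = ⟪g (X t), X' t⟫ * 0 + ⟪g (X t), X t - XT⟫ := by ring
    field_simp
    ring
  apply antitoneOn_of_deriv_nonpos (convex_Ico 0 T)
  · intro t ht
    exact (key t ht).continuousAt.continuousWithinAt
  · intro t ht
    rw [interior_Ico] at ht
    exact (key t (Set.mem_Ico_of_Ioo ht)).differentiableAt.differentiableWithinAt
  · intro t ht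
    rw [interior_Ico] at ht
    have ht' : t ∈ Set.Ico (0:ℝ) T := Set.mem_Ico_of_Ioo ht
    rw [(key t ht').deriv]
    have hpos : 0 < 4 / (T - t) ^ 3 := by
      apply div_pos (by norm_num)
      have : 0 < T - t := by linarith [ht.2]
      positivity
    have hcv := hconv XT (X t)
    have : f (X t) - f XT - ⟪g (X t), X t - XT⟫ ≤ 0 := by
      have h1 : ⟪g (X t), XT - X t⟫ = -⟪g (X t), X t - XT⟫ := by
        rw [← inner_neg_right]; congr 1; abel
      rw [h1] at hcv
      linarith
    exact mul_nonpos_of_nonneg_of_nonpos hpos.le this
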